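/- Let P(x) = ½‖y − A x‖² + λ J(x) where J is the SLOPE norm with weights w_1 > 0, w_1 ≥ ... ≥ w_n ≥ 0 and λ > 0. Then the zero vector is NOT a minimizer of P if and only if λ < λ_max := max_{q ∈ {1,...,n}} ( Σ_{k=1}^{q} |Aᵀy|_{[k]} ) / ( Σ_{k=1}^{q} w_k ). -/

import Mathlib

open Finset Matrix

/-- `kth v k` is the `(k+1)`-th largest entry of `v` (zero-indexed: `kth v 0` is the largest). -/
noncomputable def kth {n : ℕ} (v : Fin n → ℝ) (k : ℕ) : ℝ :=
  if h : k < n then v (Tuple.sort (fun i => -v i) ⟨k, h⟩) else 0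

/-- `absKth v k` is the `(k+1)`-th largest absolute entry of `v` (zero-indexed). -/
noncomputable def absKth {n : ℕ} (v : Fin n → ℝ) (k : ℕ) : ℝ :=
  kth (fun i => |v i|) k

/-- The SLOPE (sorted-ℓ1) function with weights `w 0 ≥ w 1 ≥ …` (zero-indexed). -/
noncomputable def slopeNorm {n : ℕ} (w : ℕ → ℝ) (x : Fin n → ℝ) : ℝ :=
  ∑ k ∈ Finset.range n, w k * absKth x k

/-- Dual norm of a norm `J` on `ℝ^n`. -/
noncomputable def dualNorm {n : ℕ} (J : (Fin n → ℝ) → ℝ) (g : Fin n → ℝ) : ℝ :=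
  sSup {t : ℝ | ∃ x : Fin n → ℝ, J x ≤ 1 ∧ t = ∑ i, g i * x i}

/-- `dropIdx ℓ v` is the vector `v` deprived of its `ℓ`-th entry. -/
def dropIdx {n : ℕ} (ℓ : Fin n) (v : Fin n → ℝ) : Fin (n - 1) → ℝ :=
  fun j => if h : (j : ℕ) < (ℓ : ℕ) then v ⟨j, lt_trans h ℓ.isLt⟩
           else v ⟨(j : ℕ) + 1, by have := j.isLt; omega⟩

noncomputable def sortPerm {n : ℕ} (v : Fin n → ℝ) : Equiv.Perm (Fin n) :=
  Tuple.sort (fun i => -|v i|)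

lemma absKth_eq {n : ℕ} (v : Fin n → ℝ) (k : ℕ) (h : k < n) :
    absKth v k = |v (sortPerm v ⟨k, h⟩)| := by
  simp only [absKth, kth, dif_pos h, sortPerm]

lemma absKth_of_ge {n : ℕ} (v : Fin n → ℝ) (k : ℕ) (h : ¬ k < n) : absKth v k = 0 := by
  simp [absKth, kth, h]

lemma absKth_nonneg {n : ℕ} (v : Fin n → ℝ) (k : ℕ) : 0 ≤ absKth v k := by
  by_cases h : k < n
  · rw [absKth_eq v k h]; exact abs_nonneg _
  · rw [absKth_of_ge v k h]

lemma absKth_antitone {n : ℕ} (v : Fin n → ℝ) : Antitone (absKth v) := by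
  intro k j h
  by_cases hj : j < n
  · have hk : k < n := lt_of_le_of_lt h hj
    rw [absKth_eq v j hj, absKth_eq v k hk]
    have hmono := Tuple.monotone_sort (fun i => -|v i|)
      (a := (⟨k, hk⟩ : Fin n)) (b := ⟨j, hj⟩) (Fin.mk_le_mk.mpr h)
    simp only [Function.comp_apply] at hmono
    have : -|v (sortPerm v ⟨k, hk⟩)| ≤ -|v (sortPerm v ⟨j, hj⟩)| := hmono
    linarith
  · rw [absKth_of_ge v j hj]; exact absKth_nonneg v k

lemma abel_sum (a b : ℕ → ℝ) : ∀ n : ℕ,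
    ∑ k ∈ Finset.range n, a k * b k
      = (∑ q ∈ Finset.range n, (b q - b (q+1)) * ∑ k ∈ Finset.range (q+1), a k)
        + b n * ∑ k ∈ Finset.range n, a k
  | 0 => by simp
  | (n+1) => by
    rw [Finset.sum_range_succ (fun k => a k * b k), abel_sum a b n,
        Finset.sum_range_succ (fun q => (b q - b (q+1)) * ∑ k ∈ Finset.range (q+1), a k),
        Finset.sum_range_succ a]
    ring

lemma abel_compare (a c b : ℕ → ℝ) (n : ℕ)
    (hb : Antitone b) (hbn : 0 ≤ b n)
    (h : ∀ q < n, ∑ k ∈ Finset.range (q+1), a k ≤ ∑ k ∈ Finset.range (q+1), c k) :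
    ∑ k ∈ Finset.range n, a k * b k ≤ ∑ k ∈ Finset.range n, c k * b k := by
  rcases Nat.eq_zero_or_pos n with rfl | hn
  · simp
  rw [abel_sum a b n, abel_sum c b n]
  have hSn : ∑ k ∈ Finset.range n, a k ≤ ∑ k ∈ Finset.range n, c k := by
    have := h (n-1) (by omega)
    have hh : n - 1 + 1 = n := by omega
    rwa [hh] at this
  refine add_le_add (Finset.sum_le_sum ?_) (mul_le_mul_of_nonneg_left hSn hbn)
  intro q hq
  exact mul_le_mul_of_nonneg_left (h q (Finset.mem_range.mp hq))
    (sub_nonneg.mpr (hb (Nat.le_succ q)))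

lemma rearrange {n : ℕ} (g x : Fin n → ℝ) :
    ∑ i, |g i| * |x i| ≤ ∑ k ∈ Finset.range n, absKth g k * absKth x k := by
  set σ := sortPerm g with hσ
  set τ := sortPerm x with hτ
  set a : Fin n → ℝ := fun k => absKth g (k : ℕ) with ha
  set b : Fin n → ℝ := fun k => absKth x (k : ℕ) with hb
  have hmono : Monovary a b := by
    intro i j hij
    have hji : j ≤ i := by
      by_contra hc
      exact absurd (absKth_antitone x (by exact_mod_cast (not_le.mp hc).le)) (not_le.mpr hij)
    exact absKth_antitone g (by exact_mod_cast hji)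
  have h1 : ∑ i, |g i| * |x i| = ∑ k, a k * b ((σ.trans τ.symm) k) := by
    rw [← Equiv.sum_comp σ (fun i => |g i| * |x i|)]
    refine Finset.sum_congr rfl fun k _ => ?_
    have hak : a k = |g (σ k)| := by
      show absKth g (k : ℕ) = _
      rw [absKth_eq g k k.isLt]
    have hbk : b ((σ.trans τ.symm) k) = |x (σ k)| := by
      show absKth x ((τ.symm (σ k) : Fin n) : ℕ) = _
      rw [absKth_eq x _ (τ.symm (σ k)).isLt]
      simp [hτ]
    rw [hak, hbk]
  have h2 : ∑ k, a k * b k = ∑ k ∈ Finset.range n, absKth g k * absKth x k := by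
    rw [← Fin.sum_univ_eq_sum_range (fun j => absKth g j * absKth x j) n]
  rw [h1, ← h2]
  exact hmono.sum_mul_comp_perm_le_sum_mul (σ := σ.trans τ.symm)

lemma sign_construction {n : ℕ} (g : Fin n → ℝ) (w : ℕ → ℝ) (q : ℕ) (hq : q < n)
    (t : ℝ) (ht : 0 < t) :
    ∃ x : Fin n → ℝ,
      (∑ j, g j * x j = t * ∑ k ∈ Finset.range (q+1), absKth g k) ∧
      slopeNorm w x = t * ∑ k ∈ Finset.range (q+1), w k ∧
      x = t • (fun i => if (((sortPerm g).symm i : Fin n) : ℕ) < q+1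
                        then (if 0 ≤ g i then (1:ℝ) else -1) else 0) := by
  set σ := sortPerm g with hσ
  refine ⟨fun i => if ((σ.symm i : Fin n) : ℕ) < q+1
            then t * (if 0 ≤ g i then (1:ℝ) else -1) else 0, ?_, ?_, ?_⟩
  rotate_right
  · funext i
    by_cases h : ((σ.symm i : Fin n) : ℕ) < q + 1 <;>
      simp [h, Pi.smul_apply, smul_eq_mul] <;> intro h' <;> omega
  · -- inner product
    set x : Fin n → ℝ := fun i => if ((σ.symm i : Fin n) : ℕ) < q+1
            then t * (if 0 ≤ g i then (1:ℝ) else -1) else 0 with hx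
    have key : ∀ k : Fin n, g (σ k) * x (σ k)
        = (if (k : ℕ) < q+1 then t * absKth g (k : ℕ) else 0) := by
      intro k
      have hxσ : x (σ k) = if (k : ℕ) < q+1
          then t * (if 0 ≤ g (σ k) then (1:ℝ) else -1) else 0 := by
        rw [hx]; simp
      rw [hxσ]
      by_cases hk : (k : ℕ) < q+1
      · rw [if_pos hk, if_pos hk, absKth_eq g (k : ℕ) k.isLt]
        simp only [Fin.eta, ← hσ]
        by_cases h2 : 0 ≤ g (σ k)
        · rw [if_pos h2, abs_of_nonneg h2]; ring
        · rw [if_neg h2, abs_of_neg (lt_of_not_ge h2)]; ring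
      · simp [hk]
    have e1 : ∑ j : Fin n, g j * x j
        = ∑ k ∈ Finset.range n, (if k < q+1 then t * absKth g k else 0) := by
      rw [← Equiv.sum_comp σ (fun j => g j * x j),
          ← Fin.sum_univ_eq_sum_range (fun k => if k < q+1 then t * absKth g k else 0) n]
      exact Finset.sum_congr rfl fun k _ => key k
    have e2 : ∑ k ∈ Finset.range n, (if k < q+1 then t * absKth g k else 0)
        = ∑ k ∈ Finset.range (q+1), (if k < q+1 then t * absKth g k else 0) :=
      (Finset.sum_subset (Finset.range_subset_range.mpr hq)
        (fun k _ hk => if_neg (by simpa using hk))).symm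
    rw [e1, e2, Finset.mul_sum]
    exact Finset.sum_congr rfl fun k hk => if_pos (Finset.mem_range.mp hk)
  · -- slope norm
    set x : Fin n → ℝ := fun i => if ((σ.symm i : Fin n) : ℕ) < q+1
            then t * (if 0 ≤ g i then (1:ℝ) else -1) else 0 with hx
    have habs : ∀ i, |x i| = if ((σ.symm i : Fin n) : ℕ) < q+1 then t else 0 := by
      intro i
      rw [hx]
      by_cases h : ((σ.symm i : Fin n) : ℕ) < q+1
      · rw [if_pos h]
        simp only [if_pos h]
        by_cases h2 : 0 ≤ g i <;> simp [h2, abs_of_pos ht]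
      · simp [h]
    have hmono : Monotone ((fun i => -|x i|) ∘ σ) := by
      intro k k' hkk'
      simp only [Function.comp_apply, habs, Equiv.symm_apply_apply]
      by_cases h' : (k' : ℕ) < q+1
      · have hkq : (k : ℕ) < q+1 := lt_of_le_of_lt (by exact_mod_cast hkk') h'
        simp [h', hkq]
      · rw [if_neg h']
        by_cases hkq : (k : ℕ) < q+1 <;> simp [hkq] <;> linarith
    have hsorteq : (fun i => -|x i|) ∘ σ = (fun i => -|x i|) ∘ Tuple.sort (fun i => -|x i|) :=
      Tuple.comp_sort_eq_comp_iff_monotone.mpr hmono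
    have habsKth : ∀ k, k < n → absKth x k = if k < q+1 then t else 0 := by
      intro k hk
      rw [absKth_eq x k hk]
      have h2 := congrFun hsorteq (⟨k, hk⟩ : Fin n)
      simp only [Function.comp_apply] at h2
      have h3 : |x (sortPerm x ⟨k, hk⟩)| = |x (σ ⟨k, hk⟩)| := by
        have h4 : sortPerm x = Tuple.sort (fun i => -|x i|) := rfl
        rw [h4]; linarith [h2]
      rw [h3, habs, Equiv.symm_apply_apply]
    show ∑ k ∈ Finset.range n, w k * absKth x k = _
    have e1 : ∑ k ∈ Finset.range n, w k * absKth x k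
        = ∑ k ∈ Finset.range n, (if k < q+1 then w k * t else 0) := by
      refine Finset.sum_congr rfl fun k hk => ?_
      rw [habsKth k (Finset.mem_range.mp hk)]
      by_cases h : k < q+1 <;> simp [h]
    have e2 : ∑ k ∈ Finset.range n, (if k < q+1 then w k * t else 0)
        = ∑ k ∈ Finset.range (q+1), (if k < q+1 then w k * t else 0) :=
      (Finset.sum_subset (Finset.range_subset_range.mpr hq)
        (fun k _ hk => if_neg (by simpa using hk))).symm
    rw [e1, e2, Finset.mul_sum]
    exact Finset.sum_congr rfl fun k hk => by
      rw [if_pos (Finset.mem_range.mp hk)]; ring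

theorem zero_not_minimizer_iff {m n : ℕ} (hn : 0 < n)
    (A : Matrix (Fin m) (Fin n) ℝ) (y : Fin m → ℝ)
    (w : ℕ → ℝ) (hw0 : 0 < w 0)
    (hwa : ∀ i j : ℕ, i ≤ j → j < n → w j ≤ w i) (hwn : 0 ≤ w (n - 1))
    (lam : ℝ) (hlam : 0 < lam)
    (P : (Fin n → ℝ) → ℝ)
    (hP : ∀ x, P x = (1 / 2) * ∑ i, (y i - (A *ᵥ x) i) ^ 2 + lam * slopeNorm w x) :
    (¬ ∀ x : Fin n → ℝ, P 0 ≤ P x) ↔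
      lam < (Finset.range n).sup' (Finset.nonempty_range_iff.mpr hn.ne')
        (fun q => (∑ k ∈ Finset.range (q + 1), absKth (Aᵀ *ᵥ y) k) /
                  (∑ k ∈ Finset.range (q + 1), w k)) := by
  set g : Fin n → ℝ := Aᵀ *ᵥ y with hg
  have hwnn : ∀ k, k < n → 0 ≤ w k := fun k hk =>
    le_trans hwn (hwa k (n-1) (by omega) (by omega))
  have Wpos : ∀ q, q < n → 0 < ∑ k ∈ Finset.range (q+1), w k := by
    intro q hq
    refine Finset.sum_pos' (fun k hk => hwnn k ?_)
      ⟨0, Finset.mem_range.mpr (Nat.succ_pos q), hw0⟩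
    have := Finset.mem_range.mp hk; omega
  have h0 : slopeNorm w (0 : Fin n → ℝ) = 0 := by
    apply Finset.sum_eq_zero
    intro k hk
    have hz : absKth (0 : Fin n → ℝ) k = 0 := by
      by_cases h : k < n
      · rw [absKth_eq _ k h]; simp
      · exact absKth_of_ge _ k h
    rw [hz, mul_zero]
  have hdiff : ∀ x : Fin n → ℝ,
      P x = P 0 + ((1/2) * ∑ i, ((A *ᵥ x) i)^2 - ∑ j, g j * x j + lam * slopeNorm w x) := by
    intro x
    have hyz : ∑ j, g j * x j = ∑ i, y i * ((A *ᵥ x) i) := by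
      have h1 : g ⬝ᵥ x = y ⬝ᵥ (A *ᵥ x) := by
        rw [hg, Matrix.mulVec_transpose, ← Matrix.dotProduct_mulVec]
      simpa [dotProduct] using h1
    have hsq : ∑ i, (y i - (A *ᵥ x) i)^2
        = ∑ i, (y i)^2 - 2 * ∑ i, y i * ((A *ᵥ x) i) + ∑ i, ((A *ᵥ x) i)^2 := by
      have hpt : ∀ i, (y i - (A *ᵥ x) i)^2
          = ((y i)^2 - 2*(y i * ((A *ᵥ x) i))) + ((A *ᵥ x) i)^2 := fun i => by ring
      rw [Finset.sum_congr rfl fun i _ => hpt i, Finset.sum_add_distrib,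
          Finset.sum_sub_distrib, ← Finset.mul_sum]
    rw [hP x, hP 0, h0, Matrix.mulVec_zero]
    simp only [Pi.zero_apply, sub_zero]
    rw [hsq, hyz]
    ring
  have main : (¬ ∀ x : Fin n → ℝ, P 0 ≤ P x) ↔
      ∃ q ∈ Finset.range n, lam * ∑ k ∈ Finset.range (q+1), w k
        < ∑ k ∈ Finset.range (q+1), absKth g k := by
    constructor
    · intro hnot
      by_contra hcon
      push_neg at hnot hcon
      obtain ⟨x, hxlt⟩ := hnot
      have h1 : ∑ j, g j * x j ≤ ∑ i, |g i| * |x i| :=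
        Finset.sum_le_sum fun i _ => (le_abs_self _).trans (le_of_eq (abs_mul _ _))
      have h2 := rearrange g x
      have h3 : ∑ k ∈ Finset.range n, absKth g k * absKth x k
          ≤ ∑ k ∈ Finset.range n, (lam * w k) * absKth x k := by
        apply abel_compare _ _ _ n (absKth_antitone x) (absKth_nonneg x n)
        intro q' hq'
        rw [← Finset.mul_sum]
        exact hcon q' (Finset.mem_range.mpr hq')
      have h4 : ∑ k ∈ Finset.range n, (lam * w k) * absKth x k = lam * slopeNorm w x := by
        simp only [slopeNorm, Finset.mul_sum]
        exact Finset.sum_congr rfl fun k _ => by ring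
      have h5 : 0 ≤ ∑ i, ((A *ᵥ x) i)^2 := Finset.sum_nonneg fun i _ => sq_nonneg _
      have h6 := hdiff x
      linarith
    · rintro ⟨q, hqmem, hqlt⟩
      have hq : q < n := Finset.mem_range.mp hqmem
      intro hall
      set S := ∑ k ∈ Finset.range (q+1), absKth g k with hS
      set W := ∑ k ∈ Finset.range (q+1), w k with hW
      have hδ : 0 < S - lam * W := sub_pos.mpr hqlt
      set x₁ : Fin n → ℝ := fun i => if (((sortPerm g).symm i : Fin n) : ℕ) < q+1
                        then (if 0 ≤ g i then (1:ℝ) else -1) else 0 with hx₁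
      set C := ∑ i, ((A *ᵥ x₁) i)^2 with hC
      have hC0 : 0 ≤ C := Finset.sum_nonneg fun i _ => sq_nonneg _
      set t := (S - lam * W) / (C + 1) with htdef
      have ht : 0 < t := div_pos hδ (by linarith)
      obtain ⟨x, hgx, hJ, hxeq⟩ := sign_construction g w q hq t ht
      have hquad : ∑ i, ((A *ᵥ x) i)^2 = t^2 * C := by
        rw [hxeq, Matrix.mulVec_smul, hC, Finset.mul_sum]
        exact Finset.sum_congr rfl fun i _ => by
          simp only [Pi.smul_apply, smul_eq_mul]; ring
      have hPx : P x = P 0 + ((1/2) * (t^2*C) - t * S + lam * (t * W)) := by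
        rw [hdiff x, hquad, hgx, hJ]
      have key : t * (C + 1) = S - lam * W := div_mul_cancel₀ _ (by linarith)
      have hneg : (1/2) * (t^2*C) - t * S + lam * (t * W) < 0 := by
        nlinarith [mul_pos ht ht, ht, hC0, key]
      have := hall x
      rw [hPx] at this
      linarith
  rw [main, Finset.lt_sup'_iff]
  constructor
  · rintro ⟨q, hqmem, h⟩
    exact ⟨q, hqmem, (lt_div_iff₀ (Wpos q (Finset.mem_range.mp hqmem))).mpr h⟩
  · rintro ⟨q, hqmem, h⟩
    exact ⟨q, hqmem, (lt_div_iff₀ (Wpos q (Finset.mem_range.mp hqmem))).mp h⟩
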